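/- With Y = diag(y_1, ..., y_m) and M the cycle-basis matrix of a connected graph G, det(M Y M^T) equals the first Symanzik polynomial Σ_{T ∈ ST(G)} Π_{e ∉ T} y_e, where the sum is over spanning trees T of G. -/

import Mathlib

open Finset Matrix
open scoped Classical

variable {V E : Type*}

/-- Two vertices are joined by an edge of the edge set `S`. -/
def adjRel (src tgt : E → V) (S : Finset E) (u v : V) : Prop :=
  ∃ e ∈ S, (src e = u ∧ tgt e = v) ∨ (src e = v ∧ tgt e = u)

/-- Reachability using only edges in `S`. -/
def reach (src tgt : E → V) (S : Finset E) : V → V → Prop :=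
  Relation.EqvGen (adjRel src tgt S)

/-- Number of connected components of the spanning subgraph with edge set `S`. -/
noncomputable def nComp (src tgt : E → V) (S : Finset E) : ℕ :=
  Nat.card (Quotient (Relation.EqvGen.setoid (adjRel src tgt S)))

/-- A spanning tree: connected spanning subgraph with `|V| - 1` edges. -/
def IsSpanningTree (src tgt : E → V) [Fintype V] (S : Finset E) : Prop :=
  nComp src tgt S = 1 ∧ S.card + 1 = Fintype.card V

/-- A spanning 2-forest: spanning subgraph with exactly two connected
components and `|V| - 2` edges (hence acyclic). -/
def IsSpanning2Forest (src tgt : E → V) [Fintype V] (S : Finset E) : Prop :=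
  nComp src tgt S = 2 ∧ S.card + 2 = Fintype.card V

/-- The edges of `S` with both endpoints in `X` (edge set of the induced subgraph `S[X]`). -/
noncomputable def inducedEdges (src tgt : E → V) (S : Finset E) (X : Finset V) : Finset E :=
  S.filter fun e => src e ∈ X ∧ tgt e ∈ X

/-- The induced subgraph `S[X]` is a (spanning) tree on the vertex set `X`. -/
def IsTreeOn (src tgt : E → V) (X : Finset V) (S : Finset E) : Prop :=
  (inducedEdges src tgt S X).card + 1 = X.card ∧
    ∀ u ∈ X, ∀ v ∈ X, reach src tgt (inducedEdges src tgt S X) u v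

/-- `X` is saturated w.r.t. the (multi)graph with all edges `E`:
the induced subgraph has exactly `2|X| - 2` edges. -/
def Saturated (src tgt : E → V) [Fintype E] (X : Finset V) : Prop :=
  X.Nonempty ∧ (inducedEdges src tgt Finset.univ X).card + 2 = 2 * X.card

/-- The boundary map `∂ : R^E → R^V`, `e ↦ head(e) - tail(e)`. -/
noncomputable def bnd {R : Type*} [Ring R] [Fintype E] (src tgt : E → V) (ω : E → R) : V → R :=
  fun v => ∑ e, ω e * ((if tgt e = v then (1 : R) else 0) - (if src e = v then (1 : R) else 0))

/-- The rows of `M` form an integral basis of `H₁(G, ℤ) = ker (∂ : ℤ^E → ℤ^V)`. -/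
def IsCycleBasis [Fintype E] {h : ℕ} (src tgt : E → V) (M : Fin h → E → ℤ) : Prop :=
  (∀ i, bnd src tgt (M i) = 0) ∧ LinearIndependent ℤ M ∧
    ∀ x : E → ℤ, bnd src tgt x = 0 → x ∈ Submodule.span ℤ (Set.range M)

/-- The real matrix with the same entries as the integer matrix `M`. -/
noncomputable def rmat {h : ℕ} (M : Fin h → E → ℤ) : Matrix (Fin h) E ℝ :=
  Matrix.of fun i e => (M i e : ℝ)

set_option linter.unusedSectionVars false

section basics
variable (src tgt : E → V)
lemma reach_mono {S S' : Finset E} (hSS : S ⊆ S') {u v : V} (h : reach src tgt S u v) :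
    reach src tgt S' u v := by
  induction h with
  | rel a b hab => exact Relation.EqvGen.rel _ _ (by obtain ⟨e, he, h2⟩ := hab; exact ⟨e, hSS he, h2⟩)
  | refl a => exact .refl a
  | symm a b _ ih => exact .symm _ _ ih
  | trans a b c _ _ ih1 ih2 => exact .trans _ _ _ ih1 ih2
lemma reach_symm {S : Finset E} {u v : V} (h : reach src tgt S u v) : reach src tgt S v u := .symm _ _ h
lemma reach_trans {S : Finset E} {u v w : V} (h : reach src tgt S u v) (h' : reach src tgt S v w) :
    reach src tgt S u w := .trans _ _ _ h h'
lemma reach_of_edge {S : Finset E} {e : E} (he : e ∈ S) : reach src tgt S (src e) (tgt e) :=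
  Relation.EqvGen.rel _ _ ⟨e, he, Or.inl ⟨rfl, rfl⟩⟩
lemma quot_mk_eq_iff {S : Finset E} {u v : V} :
    (Quotient.mk (Relation.EqvGen.setoid (adjRel src tgt S)) u =
      Quotient.mk (Relation.EqvGen.setoid (adjRel src tgt S)) v) ↔ reach src tgt S u v := by
  rw [Quotient.eq]; rfl
lemma reach_congr_quot {S S' : Finset E}
    (h : ∀ u v, reach src tgt S u v ↔ reach src tgt S' u v) :
    nComp src tgt S = nComp src tgt S' := by
  unfold nComp
  exact Nat.card_congr (Quotient.congrRight (fun a b => by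
    show Relation.EqvGen _ a b ↔ Relation.EqvGen _ a b
    exact h a b))
lemma nComp_empty [Fintype V] : nComp src tgt (∅ : Finset E) = Fintype.card V := by
  unfold nComp
  rw [← Nat.card_eq_fintype_card]
  refine Nat.card_congr (Equiv.symm (Equiv.ofBijective (Quotient.mk _) ⟨fun a b hab => ?_, Quotient.mk_surjective⟩))
  rw [quot_mk_eq_iff] at hab
  induction hab with
  | rel a b h => obtain ⟨e, he, -⟩ := h; exact absurd he (by simp)
  | refl a => rfl
  | symm a b _ ih => exact ih.symm
  | trans a b c _ _ ih1 ih2 => exact ih1.trans ih2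
lemma nComp_eq_one_iff [Finite V] {S : Finset E} :
    nComp src tgt S = 1 ↔ Nonempty V ∧ ∀ u v, reach src tgt S u v := by
  unfold nComp
  rw [Nat.card_eq_one_iff_exists]
  constructor
  · rintro ⟨⟨q⟩, hq⟩
    refine ⟨⟨q⟩, fun u v => ?_⟩
    rw [← quot_mk_eq_iff src tgt]
    exact (hq _).trans (hq _).symm
  · rintro ⟨⟨v⟩, h⟩
    exact ⟨Quotient.mk _ v, fun q => by
      obtain ⟨u, rfl⟩ := Quotient.mk_surjective q
      exact (quot_mk_eq_iff src tgt).2 (h u v)⟩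
end basics

section merge
variable (src tgt : E → V)

lemma reach_insert_iff {S : Finset E} {e : E} {u v : V} :
    reach src tgt (insert e S) u v ↔ reach src tgt S u v ∨
      (reach src tgt S u (src e) ∧ reach src tgt S (tgt e) v) ∨
      (reach src tgt S u (tgt e) ∧ reach src tgt S (src e) v) := by
  constructor
  · intro h
    induction h with
    | rel a b hab =>
        obtain ⟨f, hf, hor⟩ := hab
        rcases Finset.mem_insert.1 hf with rfl | hf
        · rcases hor with ⟨h1, h2⟩ | ⟨h1, h2⟩
          · subst h1; subst h2; exact Or.inr (Or.inl ⟨.refl _, .refl _⟩)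
          · subst h1; subst h2; exact Or.inr (Or.inr ⟨.refl _, .refl _⟩)
        · exact Or.inl (Relation.EqvGen.rel _ _ ⟨f, hf, hor⟩)
    | refl a => exact Or.inl (.refl a)
    | symm a b _ ih =>
        rcases ih with h | ⟨h1, h2⟩ | ⟨h1, h2⟩
        · exact Or.inl (reach_symm _ _ h)
        · exact Or.inr (Or.inr ⟨reach_symm _ _ h2, reach_symm _ _ h1⟩)
        · exact Or.inr (Or.inl ⟨reach_symm _ _ h2, reach_symm _ _ h1⟩)
    | trans a b c _ _ ih1 ih2 =>
        rcases ih1 with h1 | ⟨h1, h2⟩ | ⟨h1, h2⟩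
        · rcases ih2 with h3 | ⟨h3, h4⟩ | ⟨h3, h4⟩
          · exact Or.inl (reach_trans _ _ h1 h3)
          · exact Or.inr (Or.inl ⟨reach_trans _ _ h1 h3, h4⟩)
          · exact Or.inr (Or.inr ⟨reach_trans _ _ h1 h3, h4⟩)
        · rcases ih2 with h3 | ⟨h3, h4⟩ | ⟨h3, h4⟩
          · exact Or.inr (Or.inl ⟨h1, reach_trans _ _ h2 h3⟩)
          · exact Or.inr (Or.inl ⟨h1, h4⟩)
          · exact Or.inl (reach_trans _ _ h1 h4)
        · rcases ih2 with h3 | ⟨h3, h4⟩ | ⟨h3, h4⟩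
          · exact Or.inr (Or.inr ⟨h1, reach_trans _ _ h2 h3⟩)
          · exact Or.inl (reach_trans _ _ h1 h4)
          · exact Or.inr (Or.inr ⟨h1, h4⟩)
  · rintro (h | ⟨h1, h2⟩ | ⟨h1, h2⟩)
    · exact reach_mono _ _ (Finset.subset_insert e S) h
    · exact reach_trans _ _ (reach_mono _ _ (Finset.subset_insert e S) h1)
        (reach_trans _ _ (reach_of_edge _ _ (Finset.mem_insert_self e S))
          (reach_mono _ _ (Finset.subset_insert e S) h2))
    · exact reach_trans _ _ (reach_mono _ _ (Finset.subset_insert e S) h1)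
        (reach_trans _ _ (reach_symm _ _ (reach_of_edge _ _ (Finset.mem_insert_self e S)))
          (reach_mono _ _ (Finset.subset_insert e S) h2))

lemma nComp_le_insert [Finite V] (S : Finset E) (e : E) :
    nComp src tgt S ≤ nComp src tgt (insert e S) + 1 := by
  set s1 := Relation.EqvGen.setoid (adjRel src tgt S) with hs1
  set s2 := Relation.EqvGen.setoid (adjRel src tgt (insert e S)) with hs2
  have wd : ∀ a b : V, reach src tgt S a b →
      (if reach src tgt S a (src e) then (none : Option (Quotient s2))
       else some (Quotient.mk s2 a)) =
      (if reach src tgt S b (src e) then none else some (Quotient.mk s2 b)) := by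
    intro a b hab
    by_cases hp : reach src tgt S a (src e)
    · rw [if_pos hp, if_pos (reach_trans _ _ (reach_symm _ _ hab) hp)]
    · rw [if_neg hp, if_neg (fun hb => hp (reach_trans _ _ hab hb))]
      exact congrArg some ((quot_mk_eq_iff src tgt).2
        (reach_mono _ _ (Finset.subset_insert e S) hab))
  set f : Quotient s1 → Option (Quotient s2) :=
    Quotient.lift (fun a => if reach src tgt S a (src e) then (none : Option (Quotient s2))
      else some (Quotient.mk s2 a)) wd with hf
  have hinj : Function.Injective f := by
    intro q1 q2
    obtain ⟨a, rfl⟩ := Quotient.mk_surjective q1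
    obtain ⟨b, rfl⟩ := Quotient.mk_surjective q2
    simp only [hf, Quotient.lift_mk]
    change (if _ then _ else _) = (if _ then _ else _) → _
    by_cases ha : reach src tgt S a (src e) <;> by_cases hb : reach src tgt S b (src e) <;>
      simp only [if_pos, if_neg, ha, hb, if_true, if_false]
    · intro _
      exact (quot_mk_eq_iff src tgt).2 (reach_trans _ _ ha (reach_symm _ _ hb))
    · intro h; exact absurd h (by simp)
    · intro h; exact absurd h (by simp)
    · intro h
      have h2 : reach src tgt (insert e S) a b := by
        rw [← quot_mk_eq_iff src tgt]
        exact Option.some_injective _ h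
      rcases (reach_insert_iff src tgt).1 h2 with h3 | ⟨h3, h4⟩ | ⟨h3, h4⟩
      · exact (quot_mk_eq_iff src tgt).2 h3
      · exact absurd h3 ha
      · exact absurd (reach_symm _ _ h4) hb
  haveI := Fintype.ofFinite (Quotient s2)
  calc Nat.card (Quotient s1) ≤ Nat.card (Option (Quotient s2)) :=
        Nat.card_le_card_of_injective f hinj
    _ = Nat.card (Quotient s2) + 1 := Finite.card_option

lemma card_V_le_nComp_add_card [Fintype V] (S : Finset E) :
    Fintype.card V ≤ nComp src tgt S + S.card := by
  induction S using Finset.induction_on with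
  | empty => simp [nComp_empty]
  | @insert e S he ih =>
      rw [Finset.card_insert_of_notMem he]
      calc Fintype.card V ≤ nComp src tgt S + S.card := ih
        _ ≤ (nComp src tgt (insert e S) + 1) + S.card := by
            exact Nat.add_le_add_right (nComp_le_insert src tgt S e) _
        _ = nComp src tgt (insert e S) + (S.card + 1) := by ring

lemma nComp_erase_of_reach [Finite V] {S : Finset E} {e : E} (he : e ∈ S)
    (h : reach src tgt (S.erase e) (src e) (tgt e)) :
    nComp src tgt S = nComp src tgt (S.erase e) := by
  refine reach_congr_quot src tgt (fun u v => ?_)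
  constructor
  · intro hr
    rw [← Finset.insert_erase he] at hr
    rcases (reach_insert_iff src tgt).1 hr with h3 | ⟨h3, h4⟩ | ⟨h3, h4⟩
    · exact h3
    · exact reach_trans _ _ h3 (reach_trans _ _ h h4)
    · exact reach_trans _ _ h3 (reach_trans _ _ (reach_symm _ _ h) h4)
  · exact reach_mono _ _ (Finset.erase_subset e S)
end merge

section linalg
variable [Fintype V] [Fintype E] (src tgt : E → V)

noncomputable def bndL : (E → ℝ) →ₗ[ℝ] (V → ℝ) where
  toFun := bnd src tgt
  map_add' x y := by
    funext v
    simp [bnd, add_mul, Finset.sum_add_distrib]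
  map_smul' c x := by
    funext v
    simp [bnd, smul_eq_mul, mul_assoc, Finset.mul_sum]

lemma sum_bnd_over (A : Finset V) (x : E → ℝ) :
    ∑ v ∈ A, bnd src tgt x v =
      ∑ e, x e * ((if tgt e ∈ A then (1:ℝ) else 0) - (if src e ∈ A then 1 else 0)) := by
  unfold bnd
  rw [Finset.sum_comm]
  refine Finset.sum_congr rfl (fun e _ => ?_)
  rw [← Finset.mul_sum]
  congr 1
  rw [Finset.sum_sub_distrib, Finset.sum_ite_eq A (tgt e) (fun _ => (1:ℝ)),
    Finset.sum_ite_eq A (src e) (fun _ => (1:ℝ))]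

/-- CORE cut lemma. -/
lemma reach_erase_of_flow {S : Finset E} {x : E → ℝ}
    (hker : bnd src tgt x = 0) (hsupp : ∀ e ∉ S, x e = 0) {e : E} (hxe : x e ≠ 0) :
    reach src tgt (S.erase e) (src e) (tgt e) := by
  have heS : e ∈ S := by by_contra h; exact hxe (hsupp e h)
  by_contra hcon
  set A : Finset V := Finset.univ.filter (fun v => reach src tgt (S.erase e) (tgt e) v) with hA
  have hmem : ∀ v, v ∈ A ↔ reach src tgt (S.erase e) (tgt e) v := by
    intro v; simp [hA]
  have hsum : ∑ v ∈ A, bnd src tgt x v = 0 := by rw [hker]; simp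
  rw [sum_bnd_over] at hsum
  rw [Finset.sum_eq_single e] at hsum
  · rw [if_pos ((hmem (tgt e)).2 (Relation.EqvGen.refl _)),
      if_neg (fun hs => hcon (reach_symm _ _ ((hmem (src e)).1 hs)))] at hsum
    simp at hsum
    exact hxe hsum
  · intro f _ hfe
    by_cases hfS : f ∈ S
    · have hf : f ∈ S.erase e := Finset.mem_erase.2 ⟨hfe, hfS⟩
      have : (tgt f ∈ A) ↔ (src f ∈ A) := by
        rw [hmem, hmem]
        constructor
        · intro h1; exact reach_trans _ _ h1 (reach_symm _ _ (reach_of_edge _ _ hf))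
        · intro h1; exact reach_trans _ _ h1 (reach_of_edge _ _ hf)
      by_cases h2 : src f ∈ A
      · rw [if_pos h2, if_pos (this.2 h2)]; ring
      · rw [if_neg h2, if_neg (fun h3 => h2 (this.1 h3))]; ring
    · rw [hsupp f hfS]; ring
  · intro h; exact absurd (Finset.mem_univ e) h

/-- L3: a subgraph with an excess edge carries a nonzero flow. -/
lemma exists_flow_of_excess (S : Finset E)
    (h : Fintype.card V < S.card + nComp src tgt S) :
    ∃ x : E → ℝ, x ≠ 0 ∧ bnd src tgt x = 0 ∧ ∀ e ∉ S, x e = 0 := by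
  by_contra hcon
  push_neg at hcon
  set s := Relation.EqvGen.setoid (adjRel src tgt S) with hs
  haveI : Fintype (Quotient s) := Fintype.ofFinite _
  -- extension by zero
  set ι : (↥S → ℝ) →ₗ[ℝ] (E → ℝ) :=
    { toFun := fun z e => if he : e ∈ S then z ⟨e, he⟩ else 0
      map_add' := fun z w => by funext e; by_cases he : e ∈ S <;> simp [he]
      map_smul' := fun c z => by funext e; by_cases he : e ∈ S <;> simp [he] } with hι
  set ψ : (V → ℝ) →ₗ[ℝ] (Quotient s → ℝ) :=
    { toFun := fun f q => ∑ v ∈ Finset.univ.filter (fun v => Quotient.mk s v = q), f v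
      map_add' := fun f g => by funext q; simp [Finset.sum_add_distrib]
      map_smul' := fun c f => by funext q; simp [Finset.mul_sum] } with hψ
  set α := (bndL src tgt).comp ι with hα
  have hsupp : ∀ z : ↥S → ℝ, ∀ e ∉ S, ι z e = 0 := by
    intro z e he; simp [hι, he]
  have hinj : Function.Injective α := by
    rw [injective_iff_map_eq_zero]
    intro z hz
    have hx : ι z = 0 := by
      by_contra hne
      obtain ⟨f, hfS, hf⟩ := hcon (ι z) hne hz
      exact hf (hsupp z f hfS)
    funext j
    have := congrFun hx j
    simpa [hι] using this
  have hrange : LinearMap.range α ≤ LinearMap.ker ψ := by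
    rintro _ ⟨z, rfl⟩
    have : ψ (α z) = 0 := by
      funext q
      show ∑ v ∈ Finset.univ.filter (fun v => Quotient.mk s v = q), bnd src tgt (ι z) v = 0
      rw [sum_bnd_over]
      refine Finset.sum_eq_zero (fun e _ => ?_)
      by_cases he : e ∈ S
      · have : (Quotient.mk s (tgt e) = q) ↔ (Quotient.mk s (src e) = q) := by
          have : Quotient.mk s (tgt e) = Quotient.mk s (src e) :=
            (quot_mk_eq_iff src tgt).2 (reach_symm _ _ (reach_of_edge _ _ he))
          rw [this]
        by_cases h2 : Quotient.mk s (src e) = q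
        · simp only [Finset.mem_filter, Finset.mem_univ, true_and]
          rw [if_pos (this.2 h2), if_pos h2]; ring
        · simp only [Finset.mem_filter, Finset.mem_univ, true_and]
          rw [if_neg (fun h3 => h2 (this.1 h3)), if_neg h2]; ring
      · rw [hsupp z e he]; ring
    exact this
  have hsurj : Function.Surjective ψ := by
    intro g
    refine ⟨fun v => if v = (Quotient.mk s v).out then g (Quotient.mk s v) else 0, ?_⟩
    funext q
    show ∑ v ∈ Finset.univ.filter (fun v => Quotient.mk s v = q),
      (if v = (Quotient.mk s v).out then g (Quotient.mk s v) else 0) = g q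
    rw [Finset.sum_eq_single q.out]
    · rw [Quotient.out_eq, if_pos rfl]
    · intro v hv hne
      have hq : Quotient.mk s v = q := (Finset.mem_filter.1 hv).2
      rw [hq, if_neg hne]
    · intro hq
      exact absurd (Finset.mem_filter.2 ⟨Finset.mem_univ q.out, Quotient.out_eq q⟩) hq
  -- dimension count
  have h1 : Module.finrank ℝ (LinearMap.range α) = S.card := by
    rw [LinearMap.finrank_range_of_inj hinj]
    simp [Module.finrank_pi]
  have h2 : Module.finrank ℝ (LinearMap.range α) ≤ Module.finrank ℝ (LinearMap.ker ψ) :=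
    Submodule.finrank_mono hrange
  have h3 : Module.finrank ℝ (LinearMap.range ψ) + Module.finrank ℝ (LinearMap.ker ψ) =
      Fintype.card V := by
    rw [LinearMap.finrank_range_add_finrank_ker ψ]
    simp [Module.finrank_pi]
  have h4 : Module.finrank ℝ (LinearMap.range ψ) = nComp src tgt S := by
    rw [LinearMap.range_eq_top.2 hsurj]
    have : nComp src tgt S = Fintype.card (Quotient s) := by
      unfold nComp
      rw [Nat.card_eq_fintype_card]
    rw [this]
    simp [Module.finrank_pi]
  omega
end linalg

section trees
variable [Fintype V] [Fintype E] (src tgt : E → V)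

/-- L2: no nonzero flow supported on a spanning forest. -/
lemma flow_eq_zero_of_forest {T : Finset E} (hT : nComp src tgt T + T.card = Fintype.card V)
    {x : E → ℝ} (hker : bnd src tgt x = 0) (hsupp : ∀ e ∉ T, x e = 0) : x = 0 := by
  by_contra hne
  have hex : ∃ e, x e ≠ 0 := by by_contra hh; push_neg at hh; exact hne (funext hh)
  obtain ⟨e, he⟩ := hex
  have heT : e ∈ T := by by_contra h; exact he (hsupp e h)
  have hre := reach_erase_of_flow src tgt hker hsupp he
  have h1 := nComp_erase_of_reach src tgt heT hre
  have h2 := card_V_le_nComp_add_card src tgt (T.erase e)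
  rw [Finset.card_erase_of_mem heT] at h2
  have h3 : 1 ≤ T.card := Finset.card_pos.2 ⟨e, heT⟩
  omega

lemma exists_spanning_tree_subset (S : Finset E) :
    nComp src tgt S = 1 → ∃ T ⊆ S, nComp src tgt T = 1 ∧ T.card + 1 = Fintype.card V := by
  induction S using Finset.strongInductionOn with
  | _ S ih =>
    intro hS
    have hle := card_V_le_nComp_add_card src tgt S
    by_cases hcard : S.card + 1 = Fintype.card V
    · exact ⟨S, Finset.Subset.refl S, hS, hcard⟩
    · have hlt : Fintype.card V < S.card + nComp src tgt S := by omega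
      obtain ⟨x, hx0, hker, hsupp⟩ := exists_flow_of_excess src tgt S hlt
      have hex : ∃ e, x e ≠ 0 := by
        by_contra hh; push_neg at hh; exact hx0 (funext hh)
      obtain ⟨e, he⟩ := hex
      have heS : e ∈ S := by by_contra h; exact he (hsupp e h)
      have hre := reach_erase_of_flow src tgt hker hsupp he
      have h1 : nComp src tgt (S.erase e) = 1 := by
        rw [← nComp_erase_of_reach src tgt heS hre]; exact hS
      obtain ⟨T, hT1, hT2, hT3⟩ := ih (S.erase e) (Finset.erase_ssubset heS) h1
      exact ⟨T, hT1.trans (Finset.erase_subset e S), hT2, hT3⟩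

omit [Fintype V] in
lemma bnd_add {R : Type*} [Ring R] (x y : E → R) :
    bnd src tgt (x + y) = bnd src tgt x + bnd src tgt y := by
  funext v
  simp [bnd, add_mul, Finset.sum_add_distrib]

omit [Fintype V] in
lemma bnd_neg {R : Type*} [Ring R] (x : E → R) :
    bnd src tgt (-x) = -bnd src tgt x := by
  funext v
  simp [bnd, Finset.sum_neg_distrib, neg_mul]

/-- unit integer flow along a path. -/
lemma exists_unit_flow {S : Finset E} {u v : V} (h : reach src tgt S u v) :
    ∃ f : E → ℤ, (∀ e ∉ S, f e = 0) ∧ bnd src tgt f =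
      fun t => (if v = t then (1:ℤ) else 0) - (if u = t then 1 else 0) := by
  induction h with
  | rel a b hab =>
      obtain ⟨e, he, hor⟩ := hab
      rcases hor with ⟨h1, h2⟩ | ⟨h1, h2⟩
      · refine ⟨fun f => if f = e then 1 else 0,
          fun f hf => if_neg (fun hh => hf (by rw [hh]; exact he)), ?_⟩
        funext t
        unfold bnd
        rw [Finset.sum_eq_single e]
        · simp [h1, h2]
        · intro f _ hf; simp only [if_neg hf, zero_mul]
        · intro hh; exact absurd (Finset.mem_univ e) hh
      · refine ⟨fun f => if f = e then -1 else 0,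
          fun f hf => if_neg (fun hh => hf (by rw [hh]; exact he)), ?_⟩
        funext t
        unfold bnd
        rw [Finset.sum_eq_single e]
        · simp [h1, h2]
        · intro f _ hf; simp only [if_neg hf, zero_mul]
        · intro hh; exact absurd (Finset.mem_univ e) hh
  | refl a => exact ⟨0, fun _ _ => rfl, by funext t; simp [bnd]⟩
  | symm a b _ ih =>
      obtain ⟨f, h1, h2⟩ := ih
      refine ⟨-f, fun e he => by simp [h1 e he], ?_⟩
      rw [bnd_neg, h2]
      funext t; simp only [Pi.neg_apply]; ring
  | trans a b c _ _ ih1 ih2 =>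
      obtain ⟨f, h1, h2⟩ := ih1
      obtain ⟨g, h3, h4⟩ := ih2
      refine ⟨f + g, fun e he => by simp [h1 e he, h3 e he], ?_⟩
      rw [bnd_add, h2, h4]
      funext t; simp only [Pi.add_apply]; ring
end trees

section matrixsec
variable [Fintype V] [Fintype E] (src tgt : E → V)

omit [Fintype V] in
lemma bnd_cast (x : E → ℤ) :
    bnd src tgt (fun e => (x e : ℝ)) = fun v => ((bnd src tgt x v : ℤ) : ℝ) := by
  funext v
  unfold bnd
  push_cast [apply_ite (Int.cast : ℤ → ℝ)]
  rfl

omit [Fintype V] in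
lemma bnd_single (e : E) :
    bnd src tgt (fun f => if f = e then (1:ℤ) else 0) =
      fun t => (if tgt e = t then 1 else 0) - (if src e = t then 1 else 0) := by
  funext t
  unfold bnd
  rw [Finset.sum_eq_single e]
  · simp
  · intro f _ hf; simp only [if_neg hf, zero_mul]
  · intro hh; exact absurd (Finset.mem_univ e) hh

/-- fundamental cycles: for each edge outside a spanning tree, an integer cycle
supported on `T ∪ {e}` with coefficient 1 at `e`. -/
lemma exists_fundamental_cycle {T : Finset E} (hT : IsSpanningTree src tgt T)
    {e : E} (heT : e ∉ T) :
    ∃ x : E → ℤ, bnd src tgt x = 0 ∧ x e = 1 ∧ ∀ f, f ≠ e → f ∉ T → x f = 0 := by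
  have hr : reach src tgt T (tgt e) (src e) := by
    obtain ⟨hV, hall⟩ := (nComp_eq_one_iff src tgt).1 hT.1
    exact hall _ _
  obtain ⟨f, hf1, hf2⟩ := exists_unit_flow src tgt hr
  refine ⟨(fun g => if g = e then (1:ℤ) else 0) + f, ?_, ?_, ?_⟩
  · rw [bnd_add, bnd_single, hf2]
    funext t
    simp only [Pi.add_apply, Pi.zero_apply]
    ring
  · have : f e = 0 := hf1 e heT
    simp [this]
  · intro g hge hgT
    have : f g = 0 := hf1 g hgT
    simp [this, hge]

/-- unimodularity: determinant of the cycle matrix on the complement of a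
spanning tree is ±1. -/
lemma det_unimodular {h : ℕ} (M : Fin h → E → ℤ) (hM : IsCycleBasis src tgt M)
    {T : Finset E} (hT : IsSpanningTree src tgt T) (s : Fin h → E)
    (hs : Function.Injective s) (hsT : ∀ j, s j ∉ T) :
    (Matrix.of fun i j => M i (s j)).det = 1 ∨ (Matrix.of fun i j => M i (s j)).det = -1 := by
  set B : Matrix (Fin h) (Fin h) ℤ := Matrix.of fun i j => M i (s j) with hB
  have hcyc : ∀ j : Fin h, ∃ c : Fin h → ℤ,
      ∀ j' : Fin h, (∑ i, c i * M i (s j')) = if j' = j then 1 else 0 := by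
    intro j
    obtain ⟨x, hx1, hx2, hx3⟩ := exists_fundamental_cycle src tgt hT (hsT j)
    obtain ⟨c, hc⟩ := (Submodule.mem_span_range_iff_exists_fun ℤ).1 (hM.2.2 x hx1)
    refine ⟨c, fun j' => ?_⟩
    have : (∑ i, c i * M i (s j')) = x (s j') := by
      rw [← hc]; simp [Finset.sum_apply]
    rw [this]
    by_cases hj : j' = j
    · subst hj; simp [hx2]
    · rw [if_neg hj, hx3 (s j') (fun hc2 => hj (hs hc2)) (hsT j')]
  choose c hc using hcyc
  set C : Matrix (Fin h) (Fin h) ℤ := Matrix.of fun i j => c j i with hC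
  have hBC : Bᵀ * C = 1 := by
    ext j' j
    rw [Matrix.mul_apply]
    have : ∑ i, Bᵀ j' i * C i j = ∑ i, c j i * M i (s j') := by
      refine Finset.sum_congr rfl (fun i _ => ?_)
      simp [hB, hC, Matrix.transpose_apply, mul_comm]
    rw [this, hc j j']
    by_cases hj : j' = j
    · subst hj; simp
    · rw [if_neg hj, Matrix.one_apply_ne hj]
  have hdet : B.det * C.det = 1 := by
    have := congrArg Matrix.det hBC
    rwa [Matrix.det_mul, Matrix.det_one, Matrix.det_transpose] at this
  have : IsUnit B.det := IsUnit.of_mul_eq_one _ hdet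
  exact Int.isUnit_iff.1 this
end matrixsec

section spansec
variable [Fintype V] [Fintype E] (src tgt : E → V)
variable (hconn : nComp src tgt (Finset.univ : Finset E) = 1)
variable {h : ℕ} (hh : h + Fintype.card V = Fintype.card E + 1)
variable (M : Fin h → E → ℤ) (hM : IsCycleBasis src tgt M)

include hconn hh hM

lemma exists_T0 : ∃ T : Finset E, IsSpanningTree src tgt T := by
  obtain ⟨T, _, h1, h2⟩ := exists_spanning_tree_subset src tgt Finset.univ hconn
  exact ⟨T, h1, h2⟩

lemma compl_card_of_tree {T : Finset E} (hT : IsSpanningTree src tgt T) : Tᶜ.card = h := by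
  have h1 : Tᶜ.card = Fintype.card E - T.card := by
    rw [Finset.card_compl]
  have h2 : T.card ≤ Fintype.card E := Finset.card_le_card (Finset.subset_univ T) |>.trans
    (le_of_eq (Finset.card_univ))
  have := hT.2
  omega

lemma rows_linindep : LinearIndependent ℝ (fun i => (fun e => (M i e : ℝ))) := by
  obtain ⟨T, hT⟩ := exists_T0 src tgt hconn hh M hM
  set s : Fin h → E := fun j => ((Tᶜ.equivFinOfCardEq (compl_card_of_tree src tgt hconn hh M hM hT)).symm j : E) with hs
  have hsinj : Function.Injective s := fun a b hab => by
    have := Subtype.ext (p := fun e => e ∈ Tᶜ) hab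
    simpa using (Equiv.injective _ this)
  have hsT : ∀ j, s j ∉ T := fun j => by
    have : s j ∈ Tᶜ := ((Tᶜ.equivFinOfCardEq _).symm j).2
    simpa using this
  have hdet := det_unimodular src tgt M hM hT s hsinj hsT
  rw [Fintype.linearIndependent_iff]
  intro g hg
  by_contra hne
  push_neg at hne
  obtain ⟨i0, hi0⟩ := hne
  have hgne : g ≠ 0 := fun hg0 => hi0 (by rw [hg0]; rfl)
  set B : Matrix (Fin h) (Fin h) ℤ := Matrix.of fun i j => M i (s j) with hBdef
  set Br : Matrix (Fin h) (Fin h) ℝ := Matrix.of fun i j => ((M i (s j) : ℤ) : ℝ) with hBrdef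
  have hBr : Br = B.map ⇑(Int.castRingHom ℝ) := rfl
  have hmd : ((B.det : ℤ) : ℝ) = Br.det := by
    rw [hBr, ← RingHom.mapMatrix_apply, ← RingHom.map_det]
    rfl
  have hvm : g ᵥ* Br = 0 := by
    funext j
    simp only [Pi.zero_apply]
    have := congrFun hg (s j)
    simp only [Finset.sum_apply, Pi.smul_apply, smul_eq_mul, Pi.zero_apply] at this
    calc (g ᵥ* Br) j = ∑ i, g i * (M i (s j) : ℝ) := by
          simp [Matrix.vecMul, dotProduct, hBrdef]
      _ = 0 := this
  have hz : Br.det = 0 := Matrix.exists_vecMul_eq_zero_iff.1 ⟨g, hgne, hvm⟩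
  rw [← hmd] at hz
  rcases hdet with hd | hd <;> rw [hd] at hz <;> simpa using hz

lemma span_eq_ker :
    Submodule.span ℝ (Set.range (fun i => (fun e => (M i e : ℝ)))) = LinearMap.ker (bndL src tgt) := by
  obtain ⟨T, hT⟩ := exists_T0 src tgt hconn hh M hM
  have hle : Submodule.span ℝ (Set.range (fun i => (fun e => (M i e : ℝ)))) ≤ LinearMap.ker (bndL src tgt) := by
    rw [Submodule.span_le]
    rintro _ ⟨i, rfl⟩
    have : bnd src tgt (fun e => ((M i e : ℤ) : ℝ)) = 0 := by
      rw [bnd_cast, hM.1 i]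
      funext v; simp
    simpa [LinearMap.mem_ker, bndL] using this
  have hforest : nComp src tgt T + T.card = Fintype.card V := by
    have := hT.1; have := hT.2; omega
  -- restriction to the complement of T is injective on the kernel
  set ρ : LinearMap.ker (bndL src tgt) →ₗ[ℝ] (↥(Tᶜ) → ℝ) :=
    { toFun := fun x j => x.1 (j : E)
      map_add' := fun x y => rfl
      map_smul' := fun c x => rfl } with hρ
  have hρinj : Function.Injective ρ := by
    rw [injective_iff_map_eq_zero]
    intro x hx
    have hsupp : ∀ e ∉ T, x.1 e = 0 := by
      intro e he
      exact congrFun hx ⟨e, Finset.mem_compl.2 he⟩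
    have hker : bnd src tgt x.1 = 0 := x.2
    have := flow_eq_zero_of_forest src tgt hforest hker hsupp
    exact Subtype.ext this
  have hdim1 : Module.finrank ℝ (LinearMap.ker (bndL src tgt)) ≤ h := by
    have := LinearMap.finrank_le_finrank_of_injective hρinj
    rwa [Module.finrank_pi, Fintype.card_coe, compl_card_of_tree src tgt hconn hh M hM hT] at this
  have hdim2 : Module.finrank ℝ
      (Submodule.span ℝ (Set.range (fun i => (fun e => (M i e : ℝ))))) = h := by
    rw [finrank_span_eq_card (rows_linindep src tgt hconn hh M hM)]
    simp
  exact Submodule.eq_of_le_of_finrank_le hle (by rw [hdim2]; exact hdim1)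

lemma det_eq_zero_of_not_tree {S : Finset E} (hScard : S.card = h)
    (hnt : ¬ IsSpanningTree src tgt Sᶜ) (s : Fin h → E) (hsmem : ∀ j, s j ∈ S) :
    ((rmat M).submatrix id s).det = 0 := by
  have hVne : Nonempty V := ((nComp_eq_one_iff src tgt).1 hconn).1
  have hTcard : Sᶜ.card + 1 = Fintype.card V := by
    have h1 : Sᶜ.card = Fintype.card E - S.card := Finset.card_compl S
    have h2 : S.card ≤ Fintype.card E := by
      rw [← Finset.card_univ]; exact Finset.card_le_card (Finset.subset_univ S)
    omega
  have hnc : nComp src tgt Sᶜ ≠ 1 := fun hc => hnt ⟨hc, hTcard⟩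
  have hnc1 : 1 ≤ nComp src tgt Sᶜ := by
    haveI : Finite V := Finite.of_fintype V
    have : Nonempty (Quotient (Relation.EqvGen.setoid (adjRel src tgt Sᶜ))) :=
      ⟨Quotient.mk _ (Classical.arbitrary V)⟩
    exact Nat.card_pos
  have hlt : Fintype.card V < Sᶜ.card + nComp src tgt Sᶜ := by omega
  obtain ⟨x, hx0, hker, hsupp⟩ := exists_flow_of_excess src tgt Sᶜ hlt
  have hmem : x ∈ LinearMap.ker (bndL src tgt) := by
    simpa [LinearMap.mem_ker, bndL] using hker
  rw [← span_eq_ker src tgt hconn hh M hM] at hmem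
  obtain ⟨c, hc⟩ := (Submodule.mem_span_range_iff_exists_fun ℝ).1 hmem
  have hcne : c ≠ 0 := by
    intro hc0
    rw [hc0] at hc
    apply hx0
    rw [← hc]
    funext e; simp
  refine Matrix.exists_vecMul_eq_zero_iff.1 ⟨c, hcne, ?_⟩
  funext j
  simp only [Pi.zero_apply]
  have hxs : x (s j) = 0 := hsupp (s j) (by simp [hsmem j])
  have hthis := congrFun hc (s j)
  simp only [Finset.sum_apply, Pi.smul_apply, smul_eq_mul] at hthis
  calc (c ᵥ* (rmat M).submatrix id s) j = ∑ i, c i * (M i (s j) : ℝ) := by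
        simp [Matrix.vecMul, dotProduct, rmat, Matrix.submatrix_apply]
    _ = x (s j) := hthis
    _ = 0 := hxs
end spansec

section cb
variable [Fintype E] {h : ℕ}

noncomputable def enum (S : Finset E) (hS : S.card = h) : Fin h → E :=
  fun j => ((S.equivFinOfCardEq hS).symm j : E)

lemma enum_mem (S : Finset E) (hS : S.card = h) (j : Fin h) : enum S hS j ∈ S :=
  ((S.equivFinOfCardEq hS).symm j).2

lemma enum_inj (S : Finset E) (hS : S.card = h) : Function.Injective (enum S hS) :=
  fun a b hab => (Equiv.injective _) (Subtype.ext hab)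

lemma enum_image (S : Finset E) (hS : S.card = h) :
    Finset.image (enum S hS) Finset.univ = S := by
  refine Finset.eq_of_subset_of_card_le ?_ ?_
  · intro e he
    obtain ⟨j, _, rfl⟩ := Finset.mem_image.1 he
    exact enum_mem S hS j
  · rw [Finset.card_image_of_injective _ (enum_inj S hS), Finset.card_univ, Fintype.card_fin, hS]

lemma enum_perm_image (S : Finset E) (hS : S.card = h) (π : Equiv.Perm (Fin h)) :
    Finset.image (fun k => enum S hS (π k)) Finset.univ = S := by
  refine Finset.eq_of_subset_of_card_le ?_ ?_
  · intro e he
    obtain ⟨k, _, rfl⟩ := Finset.mem_image.1 he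
    exact enum_mem S hS (π k)
  · rw [show (fun k => enum S hS (π k)) = (enum S hS) ∘ ⇑π from rfl,
      Finset.card_image_of_injective _ ((enum_inj S hS).comp (Equiv.injective π)),
      Finset.card_univ, Fintype.card_fin, hS]

/-- Cauchy-Binet for `A * diag y * Aᵀ`. -/
lemma det_ADA (A : Matrix (Fin h) E ℝ) (y : E → ℝ) :
    (A * Matrix.diagonal y * Aᵀ).det =
      ∑ p ∈ ((Finset.univ : Finset E).powersetCard h).attach,
        ((A.submatrix id (enum p.1 (Finset.mem_powersetCard.1 p.2).2)).det) ^ 2 *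
          ∏ e ∈ p.1, y e := by
  classical
  have entry : ∀ a b, (A * Matrix.diagonal y * Aᵀ) a b = ∑ e, A a e * y e * A b e := by
    intro a b
    rw [Matrix.mul_apply]
    refine Finset.sum_congr rfl fun e _ => ?_
    rw [Matrix.mul_diagonal, Matrix.transpose_apply]
  set F : (Fin h → E) → ℝ := fun g =>
    (∏ j, y (g j)) * (∏ j, A j (g j)) * (A.submatrix id g).det with hF
  have step1 : (A * Matrix.diagonal y * Aᵀ).det = ∑ g : Fin h → E, F g := by
    rw [Matrix.det_apply']
    have h1 : ∀ σ : Equiv.Perm (Fin h),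
        (((Equiv.Perm.sign σ : ℤ) : ℝ)) * ∏ j, (A * Matrix.diagonal y * Aᵀ) (σ j) j
        = ∑ g : Fin h → E, ((Equiv.Perm.sign σ : ℤ) : ℝ) *
            ∏ j, (A (σ j) (g j) * y (g j) * A j (g j)) := by
      intro σ
      rw [show (∏ j, (A * Matrix.diagonal y * Aᵀ) (σ j) j)
          = ∏ j, ∑ e, (A (σ j) e * y e * A j e) from
        Finset.prod_congr rfl fun j _ => entry (σ j) j]
      rw [Finset.prod_univ_sum, ← Finset.mul_sum]
      rw [Fintype.piFinset_univ]
    calc (∑ σ : Equiv.Perm (Fin h), ((Equiv.Perm.sign σ : ℤ) : ℝ) *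
            ∏ j, (A * Matrix.diagonal y * Aᵀ) (σ j) j)
        = ∑ σ : Equiv.Perm (Fin h), ∑ g : Fin h → E, ((Equiv.Perm.sign σ : ℤ) : ℝ) *
            ∏ j, (A (σ j) (g j) * y (g j) * A j (g j)) :=
          Finset.sum_congr rfl fun σ _ => h1 σ
      _ = ∑ g : Fin h → E, ∑ σ : Equiv.Perm (Fin h), ((Equiv.Perm.sign σ : ℤ) : ℝ) *
            ∏ j, (A (σ j) (g j) * y (g j) * A j (g j)) := Finset.sum_comm
      _ = ∑ g : Fin h → E, F g := by
          refine Finset.sum_congr rfl fun g _ => ?_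
          have h2 : ∀ σ : Equiv.Perm (Fin h),
              (∏ j, (A (σ j) (g j) * y (g j) * A j (g j)))
              = (∏ j, y (g j)) * (∏ j, A j (g j)) * ∏ j, A (σ j) (g j) := by
            intro σ
            rw [Finset.prod_mul_distrib, Finset.prod_mul_distrib]
            ring
          rw [Finset.sum_congr rfl fun σ _ => by rw [h2 σ]]
          have h3 : (A.submatrix id g).det
              = ∑ σ : Equiv.Perm (Fin h), ((Equiv.Perm.sign σ : ℤ) : ℝ) *
                  ∏ j, A (σ j) (g j) := by
            rw [Matrix.det_apply']
            rfl
          show _ = ((∏ j, y (g j)) * ∏ j, A j (g j)) * (A.submatrix id g).det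
          rw [h3, Finset.mul_sum]
          refine Finset.sum_congr rfl fun σ _ => by ring
  rw [step1]
  -- kill non-injective g
  have step2 : ∑ g : Fin h → E, F g
      = ∑ g ∈ Finset.univ.filter (fun g : Fin h → E => Function.Injective g), F g := by
    symm
    refine Finset.sum_filter_of_ne fun g _ hne => ?_
    by_contra hni
    apply hne
    obtain ⟨i1, i2, he, hne2⟩ := Function.not_injective_iff.1 hni
    have : (A.submatrix id g).det = 0 :=
      Matrix.det_zero_of_column_eq hne2 (fun k => by simp [Matrix.submatrix_apply, he])
    rw [hF]
    simp [this]
  rw [step2]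
  -- group by image
  set t := ((Finset.univ : Finset E).powersetCard h).attach
  set dom := t ×ˢ (Finset.univ : Finset (Equiv.Perm (Fin h))) with hdom
  set i : ({x // x ∈ (Finset.univ : Finset E).powersetCard h} × Equiv.Perm (Fin h)) → (Fin h → E) :=
    fun p => (enum p.1.1 (Finset.mem_powersetCard.1 p.1.2).2) ∘ p.2 with hi
  have step3 : ∑ g ∈ Finset.univ.filter (fun g : Fin h → E => Function.Injective g), F g
      = ∑ p ∈ dom, F (i p) := by
    symm
    refine Finset.sum_nbij i ?_ ?_ ?_ ?_
    · rintro ⟨⟨S, hS⟩, π⟩ -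
      simp only [Finset.mem_filter, Finset.mem_univ, true_and]
      exact (enum_inj S _).comp (Equiv.injective π)
    · rintro ⟨⟨S1, hS1⟩, π1⟩ h1 ⟨⟨S2, hS2⟩, π2⟩ h2 heq
      have himg : S1 = S2 := by
        have e1 : Finset.image (i (⟨⟨S1, hS1⟩, π1⟩)) Finset.univ = S1 :=
          enum_perm_image S1 (Finset.mem_powersetCard.1 hS1).2 π1
        have e2 : Finset.image (i (⟨⟨S2, hS2⟩, π2⟩)) Finset.univ = S2 :=
          enum_perm_image S2 (Finset.mem_powersetCard.1 hS2).2 π2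
        rw [← e1, ← e2, heq]
      subst himg
      have hπ : π1 = π2 := Equiv.ext fun k => enum_inj _ _ (congrFun heq k)
      simp [hπ]
    · rintro g hg
      simp only [Finset.coe_filter, Finset.mem_univ, true_and, Set.mem_setOf_eq] at hg
      have hScard : (Finset.image g Finset.univ).card = h := by
        rw [Finset.card_image_of_injective _ hg, Finset.card_univ, Fintype.card_fin]
      have hSmem : Finset.image g Finset.univ ∈ (Finset.univ : Finset E).powersetCard h :=
        Finset.mem_powersetCard.2 ⟨Finset.subset_univ _, hScard⟩
      set S := Finset.image g Finset.univ with hSdef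
      set eS := S.equivFinOfCardEq (Finset.mem_powersetCard.1 hSmem).2 with heS
      have hbij : Function.Bijective (fun k : Fin h => (⟨g k, by
          rw [hSdef]; exact Finset.mem_image_of_mem g (Finset.mem_univ k)⟩ : ↥S)) := by
        constructor
        · intro a b hab
          exact hg (congrArg Subtype.val hab)
        · rintro ⟨e, he⟩
          rw [hSdef] at he
          obtain ⟨k, _, rfl⟩ := Finset.mem_image.1 he
          exact ⟨k, rfl⟩
      set π : Equiv.Perm (Fin h) := (Equiv.ofBijective _ hbij).trans eS with hπ
      refine ⟨(⟨⟨S, hSmem⟩, π⟩ : {x // x ∈ (Finset.univ : Finset E).powersetCard h}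
          × Equiv.Perm (Fin h)), ?_, ?_⟩
      · refine Finset.mem_coe.2 (Finset.mem_product.2 ⟨Finset.mem_attach _ _, Finset.mem_univ _⟩)
      · funext k
        show enum S (Finset.mem_powersetCard.1 hSmem).2 (π k) = g k
        rw [hπ]
        simp only [Equiv.trans_apply]
        rw [enum]
        simp only [heS, Equiv.symm_apply_apply]
        rfl
    · intro p _
      rfl
  rw [step3, hdom, Finset.sum_product]
  refine Finset.sum_congr rfl fun p _ => ?_
  -- inner sum over permutations
  set s0 : Fin h → E := enum p.1 (Finset.mem_powersetCard.1 p.2).2 with hs0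
  have hdetperm : ∀ π : Equiv.Perm (Fin h),
      (A.submatrix id (s0 ∘ π)).det = ((Equiv.Perm.sign π : ℤ) : ℝ) * (A.submatrix id s0).det := by
    intro π
    have : A.submatrix id (s0 ∘ π) = (A.submatrix id s0).submatrix id ⇑π := by
      rw [Matrix.submatrix_submatrix]
      rfl
    rw [this, Matrix.det_permute']
  have hy : ∀ π : Equiv.Perm (Fin h), (∏ j, y (s0 (π j))) = ∏ e ∈ p.1, y e := by
    intro π
    rw [Equiv.prod_comp π (fun j => y (s0 j))]
    rw [← enum_image p.1 (Finset.mem_powersetCard.1 p.2).2,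
      Finset.prod_image (fun a _ b _ hab => enum_inj _ _ hab)]
  have hAperm : ∀ π : Equiv.Perm (Fin h),
      (∏ j, A j (s0 (π j))) = ∏ j, A (π⁻¹ j) (s0 j) := by
    intro π
    have := Equiv.prod_comp π (fun j => A (π⁻¹ j) (s0 j))
    simp only [Equiv.Perm.inv_def, Equiv.symm_apply_apply] at this
    exact this
  calc ∑ π : Equiv.Perm (Fin h), F (s0 ∘ π)
      = ∑ π : Equiv.Perm (Fin h), (∏ e ∈ p.1, y e) * (A.submatrix id s0).det *
          (((Equiv.Perm.sign π : ℤ) : ℝ) * ∏ j, A (π⁻¹ j) (s0 j)) := by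
        refine Finset.sum_congr rfl fun π _ => ?_
        rw [hF]
        simp only [Function.comp_apply]
        rw [show (∏ j, y (s0 (π j))) = ∏ e ∈ p.1, y e from hy π,
          show (∏ j, A j (s0 (π j))) = ∏ j, A (π⁻¹ j) (s0 j) from hAperm π,
          hdetperm π]
        ring
    _ = (∏ e ∈ p.1, y e) * (A.submatrix id s0).det *
          ∑ π : Equiv.Perm (Fin h), (((Equiv.Perm.sign π : ℤ) : ℝ) * ∏ j, A (π j) (s0 j)) := by
        rw [← Finset.mul_sum]
        congr 1
        refine Finset.sum_nbij (fun π => π⁻¹) ?_ ?_ ?_ ?_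
        · intro π _; exact Finset.mem_univ _
        · intro π1 _ π2 _ heq; exact inv_injective heq
        · intro π _; exact ⟨π⁻¹, Finset.mem_univ _, inv_inv π⟩
        · intro π _
          rw [Equiv.Perm.sign_inv]
    _ = ((A.submatrix id s0).det) ^ 2 * ∏ e ∈ p.1, y e := by
        have : (∑ π : Equiv.Perm (Fin h), (((Equiv.Perm.sign π : ℤ) : ℝ) * ∏ j, A (π j) (s0 j)))
            = (A.submatrix id s0).det := by
          rw [Matrix.det_apply']
          rfl
        rw [this]
        ring

end cb


/-- `det (M Y Mᵀ)` is the first Symanzik polynomial: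
the sum over spanning trees `T` of `∏_{e ∉ T} y_e`. -/
theorem stmt_9 [Fintype V] [Fintype E] (src tgt : E → V)
    (hconn : nComp src tgt (Finset.univ : Finset E) = 1)
    {h : ℕ} (hh : h + Fintype.card V = Fintype.card E + 1)
    (M : Fin h → E → ℤ) (hM : IsCycleBasis src tgt M)
    (y : E → ℝ) :
    (rmat M * Matrix.diagonal y * (rmat M)ᵀ).det =
      ∑ T : {T : Finset E // IsSpanningTree src tgt T}, ∏ e ∈ (T.1)ᶜ, y e := by
  rw [det_ADA (rmat M) y]
  have key : ∀ p ∈ ((Finset.univ : Finset E).powersetCard h).attach,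
      ((rmat M).submatrix id (enum p.1 (Finset.mem_powersetCard.1 p.2).2)).det ^ 2 *
        ∏ e ∈ p.1, y e
      = if IsSpanningTree src tgt ((p.1 : Finset E)ᶜ) then ∏ e ∈ p.1, y e else 0 := by
    intro p _
    have pf : (p.1 : Finset E).card = h := (Finset.mem_powersetCard.1 p.2).2
    set s0 := enum (p.1 : Finset E) pf with hs0
    have hcast : ((rmat M).submatrix id s0).det
        = (((Matrix.of fun i j => M i (s0 j)).det : ℤ) : ℝ) := by
      have : (rmat M).submatrix id s0
          = (Matrix.of fun i j => M i (s0 j)).map ⇑(Int.castRingHom ℝ) := rfl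
      rw [this, ← RingHom.mapMatrix_apply, ← RingHom.map_det]
      rfl
    by_cases ht : IsSpanningTree src tgt ((p.1 : Finset E)ᶜ)
    · rw [if_pos ht]
      have hdet := det_unimodular src tgt M hM ht s0 (enum_inj _ pf)
        (fun j hc => (Finset.mem_compl.1 hc) (enum_mem _ pf j))
      rcases hdet with hd | hd <;> rw [hcast, hd] <;> norm_num
    · rw [if_neg ht]
      have hz := det_eq_zero_of_not_tree src tgt hconn hh M hM pf ht s0
        (fun j => enum_mem _ pf j)
      rw [hz]
      ring
  rw [Finset.sum_congr rfl key, ← Finset.sum_filter]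
  refine Finset.sum_bij'
    (i := fun p hp => (⟨(p.1 : Finset E)ᶜ, (Finset.mem_filter.1 hp).2⟩ :
      {T : Finset E // IsSpanningTree src tgt T}))
    (j := fun T _ => ⟨(T.1)ᶜ, Finset.mem_powersetCard.2 ⟨Finset.subset_univ _,
      compl_card_of_tree src tgt hconn hh M hM T.2⟩⟩)
    ?_ ?_ ?_ ?_ ?_
  · intro a ha
    exact Finset.mem_univ _
  · intro T hT
    refine Finset.mem_filter.2 ⟨Finset.mem_attach _ _, ?_⟩
    show IsSpanningTree src tgt (((T.1)ᶜ)ᶜ)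
    rw [compl_compl]
    exact T.2
  · intro a ha
    apply Subtype.ext
    show ((a.1 : Finset E)ᶜ)ᶜ = (a.1 : Finset E)
    rw [compl_compl]
  · intro T hT
    apply Subtype.ext
    show ((T.1)ᶜ)ᶜ = T.1
    rw [compl_compl]
  · intro a ha
    show (∏ e ∈ (a.1 : Finset E), y e) = ∏ e ∈ ((a.1 : Finset E)ᶜ)ᶜ, y e
    rw [compl_compl]
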